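/- Let H be a bipartite graph with parts A and B₁ ∪ B₂, |A| = 3m, |B₁| = |B₂| = 2m, such that for every subset B' ⊆ B₁ of size m, the graph H − B' has a perfect matching. Let H' be a vertex-disjoint isomorphic copy of H with parts A' and B₁' ∪ B₂', and let H'' be any bipartite graph between B₁∪B₂ and B₁'∪B₂' such that H''[B₁ ∪ B₁'] contains a perfect matching between B₁ and B₁'. Then for every pair of sets X ⊆ B₁ and Y ⊆ B₁' with |X| = |Y| ≤ m, the graph H ∪ H' ∪ H'' − (X ∪ Y) has a perfect matching. -/

import Mathlib

/-- `G` restricted to the vertex set `s` has a perfect matching. -/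
def HasPMOn {V : Type*} (G : SimpleGraph V) (s : Set V) : Prop :=
  ∃ M : SimpleGraph.Subgraph (G.induce s), M.IsPerfectMatching

/-- A functional characterization of `HasPMOn`. -/
lemma hasPMOn_iff {V : Type*} (G : SimpleGraph V) (s : Set V) :
    HasPMOn G s ↔ ∃ φ : V → V, ∀ x ∈ s,
      φ x ∈ s ∧ φ (φ x) = x ∧ φ x ≠ x ∧ G.Adj x (φ x) := by
  classical
  constructor
  · rintro ⟨M, hM⟩
    choose w hw hu using fun v : ↥s => hM.1 (hM.2 v)
    refine ⟨fun x => if hx : x ∈ s then ↑(w ⟨x, hx⟩) else x, fun x hx => ?_⟩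
    simp only [dif_pos hx]
    set v : ↥s := ⟨x, hx⟩ with hv
    have hadj : G.Adj x ↑(w v) := M.adj_sub (hw v)
    have hmem : (↑(w v) : V) ∈ s := (w v).2
    refine ⟨hmem, ?_, hadj.ne', hadj⟩
    change (if h : (↑(w v) : V) ∈ s then (↑(w ⟨↑(w v), h⟩) : V) else ↑(w v)) = x
    simp only [dif_pos hmem]
    have h1 : (⟨↑(w v), hmem⟩ : ↥s) = w v := rfl
    rw [h1]
    have h2 : v = w (w v) := hu (w v) v (hw v).symm
    rw [← h2]
  · rintro ⟨φ, hφ⟩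
    refine ⟨⟨Set.univ,
      fun a b => (G.induce s).Adj a b ∧ (φ ↑a = ↑b ∨ φ ↑b = ↑a),
      fun h => h.1,
      fun _ => trivial,
      ⟨fun a b h => ⟨h.1.symm, h.2.symm⟩⟩⟩, ?_, fun v => trivial⟩
    intro v _
    obtain ⟨h1, h2, h3, h4⟩ := hφ ↑v v.2
    refine ⟨⟨φ ↑v, h1⟩, ⟨h4, Or.inl rfl⟩, ?_⟩
    rintro y ⟨-, (h | h)⟩
    · exact Subtype.ext h.symm
    · refine Subtype.ext ?_
      have h5 := (hφ ↑y y.2).2.1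
      rw [h] at h5
      exact h5.symm

/-- Robustly matchable bipartite graphs glue.  If `H` (on parts `A`,
`B₁ ∪ B₂` with sizes `3m, 2m, 2m`) remains perfectly matchable after deleting any
`m`-subset of `B₁`, `H'` is a vertex-disjoint isomorphic copy (via `e`), and `H''` is
a bipartite graph between `B₁ ∪ B₂` and `B₁' ∪ B₂'` containing a perfect matching
between `B₁` and `B₁'`, then for all `X ⊆ B₁`, `Y ⊆ B₁'` with `|X| = |Y| ≤ m`,
`H ∪ H' ∪ H'' − (X ∪ Y)` has a perfect matching. -/
theorem stmt7 {V : Type*} [Fintype V] (m : ℕ)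
    (A B1 B2 A' B1' B2' : Set V)
    (hdisj : List.Pairwise Disjoint [A, B1, B2, A', B1', B2'])
    (hA : A.ncard = 3 * m) (hB1 : B1.ncard = 2 * m) (hB2 : B2.ncard = 2 * m)
    (H H' H'' : SimpleGraph V)
    (hHbip : ∀ x y, H.Adj x y → (x ∈ A ∧ y ∈ B1 ∪ B2) ∨ (y ∈ A ∧ x ∈ B1 ∪ B2))
    (hHrob : ∀ B' ⊆ B1, B'.ncard = m → HasPMOn H ((A ∪ B1 ∪ B2) \ B'))
    (e : V ≃ V) (hA' : A' = e '' A) (hB1' : B1' = e '' B1) (hB2' : B2' = e '' B2)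
    (hH' : ∀ x y, H'.Adj (e x) (e y) ↔ H.Adj x y)
    (hH''bip : ∀ x y, H''.Adj x y →
      (x ∈ B1 ∪ B2 ∧ y ∈ B1' ∪ B2') ∨ (y ∈ B1 ∪ B2 ∧ x ∈ B1' ∪ B2'))
    (hH''pm : ∃ f : V → V, Set.BijOn f B1 B1' ∧ ∀ x ∈ B1, H''.Adj x (f x))
    (X Y : Set V) (hX : X ⊆ B1) (hY : Y ⊆ B1')
    (hXY : X.ncard = Y.ncard) (hXm : X.ncard ≤ m) :
    HasPMOn (H ⊔ H' ⊔ H'') ((A ∪ B1 ∪ B2 ∪ A' ∪ B1' ∪ B2') \ (X ∪ Y)) := by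
  classical
  rcases isEmpty_or_nonempty V with hV | hV
  · exact (hasPMOn_iff _ _).mpr ⟨id, fun x _ => (hV.false x).elim⟩
  obtain ⟨f, hfbij, hfadj⟩ := hH''pm
  simp only [List.pairwise_cons, List.mem_cons, List.not_mem_nil, forall_eq_or_imp,
    List.mem_singleton, forall_eq, List.Pairwise.nil] at hdisj
  obtain ⟨⟨hAB1, hAB2, hAA', hAB1', hAB2'⟩, ⟨hB1B2, hB1A', hB1B1', hB1B2'⟩,
    ⟨hB2A', hB2B1', hB2B2'⟩, ⟨hA'B1', hA'B2'⟩, ⟨hB1'B2'⟩, -⟩ := hdisj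
  set k := X.ncard with hk
  set P : Set V := B1 ∩ f ⁻¹' Y with hPdef
  have hPcard : P.ncard = k := by
    have himg : f '' P = Y := by
      rw [hPdef, Set.image_inter_preimage, hfbij.image_eq,
        Set.inter_eq_self_of_subset_right hY]
    rw [← Set.ncard_image_of_injOn (hfbij.injOn.mono Set.inter_subset_left), himg, hXY]
  have hsize : m - k ≤ (B1 \ (X ∪ P)).ncard := by
    have h1 : B1.ncard ≤ (B1 \ (X ∪ P)).ncard + (X ∪ P).ncard := by
      refine le_trans (Set.ncard_le_ncard (Set.subset_diff_union B1 (X ∪ P)) ?_)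
        (Set.ncard_union_le _ _)
      exact Set.toFinite _
    have h2 : (X ∪ P).ncard ≤ k + k :=
      le_trans (Set.ncard_union_le _ _) (by rw [hPcard])
    omega
  obtain ⟨S, hSsub, hScard⟩ := Set.exists_subset_card_eq hsize
  have hSB1 : S ⊆ B1 := fun x hx => (hSsub hx).1
  have hSX : ∀ x ∈ S, x ∉ X := fun x hx hX' => (hSsub hx).2 (Or.inl hX')
  have hSfY : ∀ x ∈ S, f x ∉ Y := fun x hx hY' => (hSsub hx).2 (Or.inr ⟨hSB1 hx, hY'⟩)
  have hXS : X ∪ S ⊆ B1 := Set.union_subset hX hSB1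
  have hXScard : (X ∪ S).ncard = m := by
    rw [Set.ncard_union_eq (Set.disjoint_left.mpr (fun a ha ha' => hSX a ha' ha))
      (Set.toFinite _) (Set.toFinite _), hScard]
    omega
  have hfS : f '' S ⊆ B1' := by rw [← hfbij.image_eq]; exact Set.image_mono hSB1
  have hfScard : (f '' S).ncard = m - k := by
    rw [Set.ncard_image_of_injOn (hfbij.injOn.mono hSB1), hScard]
  have hfSY : ∀ y ∈ f '' S, y ∉ Y := by rintro y ⟨x, hx, rfl⟩; exact hSfY x hx
  set Q : Set V := Y ∪ f '' S with hQdef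
  have hQsub : Q ⊆ B1' := Set.union_subset hY hfS
  have hQcard : Q.ncard = m := by
    rw [hQdef, Set.ncard_union_eq (Set.disjoint_right.mpr hfSY) (Set.toFinite _)
      (Set.toFinite _), ← hXY, hfScard]
    omega
  have hB'2sub : e.symm '' Q ⊆ B1 := by
    rintro x ⟨q, hq, rfl⟩
    have hq' := hQsub hq
    rw [hB1'] at hq'
    obtain ⟨b, hb, rfl⟩ := hq'
    simpa using hb
  have hB'2card : (e.symm '' Q).ncard = m := by
    rw [Set.ncard_image_of_injective _ e.symm.injective, hQcard]
  set s₁ : Set V := (A ∪ B1 ∪ B2) \ (X ∪ S) with hs₁def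
  set s₂ : Set V := (A' ∪ B1' ∪ B2') \ Q with hs₂def
  obtain ⟨φ₁, hφ₁⟩ := (hasPMOn_iff H s₁).1 (hHrob (X ∪ S) hXS hXScard)
  obtain ⟨φ₀, hφ₀⟩ := (hasPMOn_iff H _).1 (hHrob (e.symm '' Q) hB'2sub hB'2card)
  have hprimed : A' ∪ B1' ∪ B2' = e '' (A ∪ B1 ∪ B2) := by
    rw [hA', hB1', hB2', Set.image_union, Set.image_union]
  have hmem2 : ∀ x, x ∈ s₂ ↔ e.symm x ∈ (A ∪ B1 ∪ B2) \ (e.symm '' Q) := by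
    intro x
    simp only [hs₂def, hprimed, Set.mem_diff, Equiv.image_eq_preimage_symm, Set.mem_preimage,
      Equiv.symm_symm, Equiv.apply_symm_apply]
  set φ₂ : V → V := fun x => e (φ₀ (e.symm x)) with hφ₂def
  have hφ₂ : ∀ x ∈ s₂, φ₂ x ∈ s₂ ∧ φ₂ (φ₂ x) = x ∧ φ₂ x ≠ x ∧ H'.Adj x (φ₂ x) := by
    intro x hx
    obtain ⟨h1, h2, h3, h4⟩ := hφ₀ (e.symm x) ((hmem2 x).1 hx)
    refine ⟨(hmem2 _).2 (by simpa [hφ₂def] using h1), ?_, ?_, ?_⟩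
    · show e (φ₀ (e.symm (e (φ₀ (e.symm x))))) = x
      rw [e.symm_apply_apply, h2, e.apply_symm_apply]
    · intro hcon
      apply h3
      have := congrArg e.symm hcon
      simpa [hφ₂def] using this
    · have h5 := (hH' (e.symm x) (φ₀ (e.symm x))).2 h4
      show H'.Adj x (e (φ₀ (e.symm x)))
      rwa [e.apply_symm_apply] at h5
  set g := Function.invFunOn f S with hgdef
  have hgS : ∀ y ∈ f '' S, g y ∈ S := by
    rintro y ⟨x, hx, rfl⟩; exact Function.invFunOn_mem ⟨x, hx, rfl⟩
  have hgf : ∀ y ∈ f '' S, f (g y) = y := by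
    rintro y ⟨x, hx, rfl⟩; exact Function.invFunOn_eq ⟨x, hx, rfl⟩
  have hg1 : ∀ x ∈ S, g (f x) = x := by
    intro x hx
    exact hfbij.injOn (hSB1 (hgS _ ⟨x, hx, rfl⟩)) (hSB1 hx) (hgf _ ⟨x, hx, rfl⟩)
  -- the two sides are disjoint
  have hside : ∀ x, x ∈ A ∪ B1 ∪ B2 → x ∉ A' ∪ B1' ∪ B2' := by
    intro x hx hx'
    rcases hx with (hx | hx) | hx <;> rcases hx' with (h' | h') | h'
    exacts [Set.disjoint_left.mp hAA' hx h', Set.disjoint_left.mp hAB1' hx h',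
      Set.disjoint_left.mp hAB2'.1 hx h', Set.disjoint_left.mp hB1A' hx h',
      Set.disjoint_left.mp hB1B1' hx h', Set.disjoint_left.mp hB1B2'.1 hx h',
      Set.disjoint_left.mp hB2A' hx h', Set.disjoint_left.mp hB2B1' hx h',
      Set.disjoint_left.mp hB2B2'.1 hx h']
  have htmem : ∀ x, x ∈ (A ∪ B1 ∪ B2 ∪ A' ∪ B1' ∪ B2') \ (X ∪ Y) ↔
      ((x ∈ A ∪ B1 ∪ B2 ∨ x ∈ A' ∪ B1' ∪ B2') ∧ x ∉ X ∧ x ∉ Y) := by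
    intro x
    simp only [Set.mem_diff, Set.mem_union]
    tauto
  have hSside : ∀ x ∈ S, x ∈ A ∪ B1 ∪ B2 := fun x hx => Or.inl (Or.inr (hSB1 hx))
  have hfSside : ∀ x ∈ f '' S, x ∈ A' ∪ B1' ∪ B2' := fun x hx => Or.inl (Or.inr (hfS hx))
  have hs₁side : ∀ x ∈ s₁, x ∈ A ∪ B1 ∪ B2 := fun x hx => hx.1
  have hs₂side : ∀ x ∈ s₂, x ∈ A' ∪ B1' ∪ B2' := fun x hx => hx.1
  have hYside : ∀ x, x ∈ A ∪ B1 ∪ B2 → x ∉ Y :=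
    fun x hx hy => hside x hx (Or.inl (Or.inr (hY hy)))
  have hXside : ∀ x, x ∈ A' ∪ B1' ∪ B2' → x ∉ X :=
    fun x hx' hx => hside x (Or.inl (Or.inr (hX hx))) hx'
  set φ : V → V := fun x =>
    if x ∈ S then f x else if x ∈ f '' S then g x else if x ∈ s₁ then φ₁ x else φ₂ x
    with hφdef
  have evS : ∀ x ∈ S, φ x = f x := by
    intro x hx; simp only [hφdef, if_pos hx]
  have evfS : ∀ x ∈ f '' S, φ x = g x := by
    intro x hx
    have h1 : x ∉ S := fun h => hside x (hSside x h) (hfSside x hx)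
    simp only [hφdef, if_neg h1, if_pos hx]
  have evs₁ : ∀ x ∈ s₁, φ x = φ₁ x := by
    intro x hx
    have h1 : x ∉ S := fun h => hx.2 (Or.inr h)
    have h2 : x ∉ f '' S := fun h => hside x (hs₁side x hx) (hfSside x h)
    simp only [hφdef, if_neg h1, if_neg h2, if_pos hx]
  have evs₂ : ∀ x ∈ s₂, φ x = φ₂ x := by
    intro x hx
    have h1 : x ∉ S := fun h => hside x (hSside x h) (hs₂side x hx)
    have h2 : x ∉ f '' S := fun h => hx.2 (Or.inr h)
    have h3 : x ∉ s₁ := fun h => hside x (hs₁side x h) (hs₂side x hx)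
    simp only [hφdef, if_neg h1, if_neg h2, if_neg h3]
  rw [hasPMOn_iff]
  refine ⟨φ, ?_⟩
  intro x hx
  rw [htmem] at hx
  obtain ⟨hx1, hxX, hxY⟩ := hx
  by_cases hxS : x ∈ S
  · rw [evS x hxS]
    have hfx : f x ∈ f '' S := ⟨x, hxS, rfl⟩
    refine ⟨?_, ?_, ?_, ?_⟩
    · rw [htmem]
      exact ⟨Or.inr (hfSside _ hfx), hXside _ (hfSside _ hfx), hfSY _ hfx⟩
    · rw [evfS _ hfx, hg1 x hxS]
    · intro hcon
      exact hside x (hSside x hxS) (hfSside x (hcon ▸ hfx))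
    · simp only [SimpleGraph.sup_adj]
      exact Or.inr (hfadj x (hSB1 hxS))
  · by_cases hxfS : x ∈ f '' S
    · rw [evfS x hxfS]
      have hgx := hgS x hxfS
      refine ⟨?_, ?_, ?_, ?_⟩
      · rw [htmem]
        exact ⟨Or.inl (hSside _ hgx), fun h => hSX _ hgx h, hYside _ (hSside _ hgx)⟩
      · rw [evS _ hgx, hgf x hxfS]
      · intro hcon
        exact hside x (hSside x (hcon ▸ hgx)) (hfSside x hxfS)
      · have h6 := hfadj (g x) (hSB1 hgx)
        rw [hgf x hxfS] at h6
        simp only [SimpleGraph.sup_adj]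
        exact Or.inr h6.symm
    · by_cases hxs₁ : x ∈ s₁
      · rw [evs₁ x hxs₁]
        obtain ⟨h1, h2, h3, h4⟩ := hφ₁ x hxs₁
        refine ⟨?_, ?_, h3, ?_⟩
        · rw [htmem]
          exact ⟨Or.inl (hs₁side _ h1), fun h => h1.2 (Or.inl h), hYside _ (hs₁side _ h1)⟩
        · rw [evs₁ _ h1, h2]
        · simp only [SimpleGraph.sup_adj]
          exact Or.inl (Or.inl h4)
      · have hxs₂ : x ∈ s₂ := by
          rcases hx1 with h | h
          · exact absurd ⟨h, fun hc => hc.elim hxX hxS⟩ hxs₁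
          · exact ⟨h, fun hc => hc.elim hxY hxfS⟩
        rw [evs₂ x hxs₂]
        obtain ⟨h1, h2, h3, h4⟩ := hφ₂ x hxs₂
        refine ⟨?_, ?_, h3, ?_⟩
        · rw [htmem]
          exact ⟨Or.inr (hs₂side _ h1), hXside _ (hs₂side _ h1), fun h => h1.2 (Or.inl h)⟩
        · rw [evs₂ _ h1, h2]
        · simp only [SimpleGraph.sup_adj]
          exact Or.inl (Or.inr h4)
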